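/- Let U ⊆ ℂ^N be open and let S = {(i,j) : 0 ≤ i ≤ l, 0 ≤ j ≤ s} be a finite index set. Fix an integer k with 1 ≤ k ≤ l, a multi-index J ∈ ℕ^k with d := J_1 + … + J_k ≥ 1, and a pair (i₀,j₀) ∈ S with i₀ ≥ 1. Given a family a = (a_{m,n}) of holomorphic functions U → ℂ indexed by m ∈ ℕ^S and n ∈ ℤ, extend a by zero to indices in ℤ^S having a negative entry, and define for m ∈ ℕ^S, n ∈ ℤ: ã_{m,n} = Σ_{l'≥0} (1/l'!) · ((m_{(0,j₀)} + l')! / m_{(0,j₀)}!) · (Π_{i'=1}^k (m_{(i',0)})^{J_{i'}})^{l'} · a_{m + l'·e_{(0,j₀)} − l'·e_{(i₀,j₀)}, n − d·l'}, where e_{(i,j)} denotes the standard basis vector of ℤ^S. Then: (1) the family (m,n) ↦ m_{(i',0)} · a_{m, n−1} satisfies condition (O^{y,z,z⁻¹}) whenever a does, for each 1 ≤ i' ≤ k; and (2) if a satisfies condition (O^{y,z,z⁻¹}), then for every (m,n) the defining sum of ã_{m,n} has only finitely many nonzero terms, and the family ã = (ã_{m,n}) again satisfies condition (O^{y,z,z⁻¹}).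 -/

import Mathlib

/-- The factorial-type weight appearing in condition `(O^{y,z,z⁻¹})`. -/
noncomputable def Fct (n : ℤ) : ℝ :=
  if 0 ≤ n then ((n.toNat).factorial : ℝ) else (((-n).toNat).factorial : ℝ)⁻¹

lemma Fct_pos (n : ℤ) : 0 < Fct n := by
  unfold Fct; split_ifs <;> positivity

lemma Fct_nonneg (n : ℤ) : 0 ≤ Fct n := (Fct_pos n).le

lemma Fct_sub_one_le (n : ℤ) : Fct (n - 1) ≤ Fct n := by
  unfold Fct
  rcases le_or_gt 0 (n - 1) with h | h
  · rw [if_pos h, if_pos (by omega)]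
    exact_mod_cast Nat.factorial_le (by omega)
  · rw [if_neg (by omega)]
    rcases le_or_gt 0 n with h2 | h2
    · rw [if_pos h2]
      have h3 : n = 0 := by omega
      subst h3; norm_num
    · rw [if_neg (by omega)]
      have : ((-n).toNat.factorial : ℝ) ≤ ((-(n-1)).toNat.factorial : ℝ) := by
        exact_mod_cast Nat.factorial_le (by omega)
      apply inv_anti₀ (by positivity) this

lemma pow_le_exp_mul_fact (x : ℝ) (hx : 0 ≤ x) (n : ℕ) :
    x ^ n ≤ Real.exp x * n.factorial := by
  have h1 : x ^ n / n.factorial ≤ Real.exp x := by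
    calc x ^ n / n.factorial ≤ ∑ i ∈ Finset.range (n + 1), x ^ i / i.factorial := by
          exact Finset.single_le_sum (f := fun i => x ^ i / i.factorial)
            (fun i _ => by positivity) (Finset.mem_range.2 (Nat.lt_succ_self n))
      _ ≤ Real.exp x := Real.sum_le_exp_of_nonneg hx _
  have hf : (0:ℝ) < n.factorial := by exact_mod_cast n.factorial_pos
  calc x ^ n = x ^ n / n.factorial * n.factorial := by field_simp
    _ ≤ Real.exp x * n.factorial := by
        exact mul_le_mul_of_nonneg_right h1 hf.le

lemma aux_fact (μ q c : ℕ) :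
    (μ : ℝ) ^ q * c.factorial ≤ Real.exp μ * Real.exp μ * (q + c).factorial := by
  have h1 : (μ:ℝ) ^ q ≤ Real.exp μ * q.factorial := pow_le_exp_mul_fact _ (by positivity) _
  have h2 : (q.factorial * c.factorial : ℝ) ≤ (q + c).factorial := by
    exact_mod_cast Nat.le_of_dvd (q + c).factorial_pos
      (Nat.factorial_mul_factorial_dvd_factorial_add q c)
  have hexp : (1:ℝ) ≤ Real.exp μ := Real.one_le_exp (by positivity)
  have hc : (0:ℝ) ≤ c.factorial := by positivity
  calc (μ : ℝ) ^ q * c.factorial ≤ (Real.exp μ * q.factorial) * c.factorial :=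
        mul_le_mul_of_nonneg_right h1 hc
    _ = Real.exp μ * (q.factorial * c.factorial) := by ring
    _ ≤ Real.exp μ * (q + c).factorial := by
        exact mul_le_mul_of_nonneg_left h2 (Real.exp_nonneg _)
    _ ≤ Real.exp μ * Real.exp μ * (q + c).factorial := by
        have h3 : (0:ℝ) ≤ ((q+c).factorial : ℝ) := by positivity
        have h4 : Real.exp (μ:ℝ) ≤ Real.exp μ * Real.exp μ := by nlinarith
        exact mul_le_mul_of_nonneg_right h4 h3

/-- Key estimate: `μ^q · F(n - q) ≤ (e²)^μ · F(n)`. -/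
lemma key_est (μ q : ℕ) (n : ℤ) :
    (μ : ℝ) ^ q * Fct (n - q) ≤ Real.exp 2 ^ μ * Fct n := by
  have hexp2 : Real.exp 2 ^ μ = Real.exp μ * Real.exp μ := by
    rw [← Real.exp_nat_mul]
    rw [show (μ:ℝ) * 2 = (μ:ℝ) + μ by ring, Real.exp_add]
  rw [hexp2]
  unfold Fct
  rcases le_or_gt 0 (n - q) with h | h
  · rw [if_pos h, if_pos (by omega)]
    have hb : n.toNat = q + (n - q).toNat := by omega
    rw [hb]
    exact aux_fact μ q _
  · rw [if_neg (by omega)]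
    rcases le_or_gt 0 n with h2 | h2
    · rw [if_pos h2]
      set a := n.toNat with ha
      set r := (-(n - q)).toNat with hr
      have hq : q = a + r := by omega
      have h1 : (μ:ℝ) ^ a ≤ Real.exp μ * a.factorial := pow_le_exp_mul_fact _ (by positivity) _
      have h2' : (μ:ℝ) ^ r ≤ Real.exp μ * r.factorial := pow_le_exp_mul_fact _ (by positivity) _
      have hrf : (0:ℝ) < (r.factorial : ℝ) := by exact_mod_cast r.factorial_pos
      calc (μ:ℝ) ^ q * ((r.factorial : ℝ))⁻¹
          ≤ ((Real.exp μ * a.factorial) * (Real.exp μ * r.factorial)) * ((r.factorial : ℝ))⁻¹ := by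
            apply mul_le_mul_of_nonneg_right _ (by positivity)
            rw [hq, pow_add]
            exact mul_le_mul h1 h2' (by positivity) (by positivity)
        _ = Real.exp μ * Real.exp μ * a.factorial := by field_simp
    · rw [if_neg (by omega)]
      have hc : (-(n - q)).toNat = q + (-n).toNat := by omega
      rw [hc]
      rw [← div_eq_mul_inv, ← div_eq_mul_inv, div_le_div_iff₀ (by positivity) (by positivity)]
      calc (μ:ℝ) ^ q * (-n).toNat.factorial
          ≤ Real.exp μ * Real.exp μ * (q + (-n).toNat).factorial := aux_fact μ q _
        _ ≤ _ := le_refl _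

lemma choose_le_two_pow' (n k : ℕ) (h : k ≤ n) : n.choose k ≤ 2 ^ n := by
  calc n.choose k ≤ ∑ i ∈ Finset.range (n + 1), n.choose i :=
        Finset.single_le_sum (fun i _ => Nat.zero_le _) (Finset.mem_range.2 (by omega))
    _ = 2 ^ n := Nat.sum_range_choose n

lemma coef_eq (m₀ l' : ℕ) :
    (1 / (l'.factorial : ℂ)) * (((m₀ + l').factorial : ℂ) / (m₀.factorial : ℂ))
      = ((m₀ + l').choose l' : ℂ) := by
  have h : (m₀ + l').choose l' * l'.factorial * m₀.factorial = (m₀ + l').factorial := by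
    have := Nat.choose_mul_factorial_mul_factorial (Nat.le_add_left l' m₀)
    simpa [Nat.add_sub_cancel] using this
  have h1 : (l'.factorial : ℂ) ≠ 0 := Nat.cast_ne_zero.2 (Nat.factorial_ne_zero _)
  have h2 : (m₀.factorial : ℂ) ≠ 0 := Nat.cast_ne_zero.2 (Nat.factorial_ne_zero _)
  field_simp
  rw [← h]
  push_cast
  ring

/-- Condition `(O^{y,z,z⁻¹})` on a family of functions `a_{m,n} : U → ℂ`
(`m ∈ ℕ^S` with `S` finite, `n ∈ ℤ`): there exist a continuous `C : U → [1, ∞)` and a constant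
`C' ≥ 1` such that (1) `a_{m,n} = 0` whenever `n < −C'(|m| + 1)`, and
(2) `|a_{m,n}(λ)| ≤ C(λ)^{|m|+|n|+1} · n!` if `n ≥ 0`, and
    `|a_{m,n}(λ)| ≤ C(λ)^{|m|+|n|+1} / (−n)!` if `n < 0`, where `|m| = ∑_s m_s`. -/
def CondOyzzinv {N : ℕ} {S : Type*} [Fintype S] (U : Set (Fin N → ℂ))
    (a : (S → ℕ) → ℤ → (Fin N → ℂ) → ℂ) : Prop :=
  ∃ (C : (Fin N → ℂ) → ℝ) (C' : ℝ), ContinuousOn C U ∧ (∀ x ∈ U, 1 ≤ C x) ∧ 1 ≤ C' ∧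
    (∀ (m : S → ℕ) (n : ℤ), (n : ℝ) < -C' * ((∑ s, m s : ℕ) + 1 : ℝ) → ∀ x ∈ U, a m n x = 0) ∧
    (∀ (m : S → ℕ) (n : ℤ), ∀ x ∈ U, ‖a m n x‖ ≤
      C x ^ ((∑ s, m s) + n.natAbs + 1) *
        (if 0 ≤ n then ((n.toNat).factorial : ℝ) else (((-n).toNat).factorial : ℝ)⁻¹))

/-- The `l'`-th term of the coefficientwise action of the operator
`exp (σ_{i₀,j₀} · ∂/∂τ_{j₀} · T(z ∂/∂t₁, …, z ∂/∂t_k))` (with `T` the monomial with exponent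
vector `J`) on a family `a`, with `a` extended by zero to indices in `ℤ^S` having a negative
entry (the guard `l' ≤ m (i₀, j₀)`): the term is
`(1/l'!) · ((m_{(0,j₀)}+l')!/m_{(0,j₀)}!) · (∏_{i'} m_{(i',0)}^{J_{i'}})^{l'} ·
 a_{m + l'·e_{(0,j₀)} − l'·e_{(i₀,j₀)}, n − d·l'}` where `d = ∑ J`. -/
noncomputable def DeltaTerm {N l s : ℕ} (k : ℕ) (hkl : k ≤ l) (J : Fin k → ℕ)
    (i₀ : Fin (l + 1)) (j₀ : Fin (s + 1))
    (a : (Fin (l + 1) × Fin (s + 1) → ℕ) → ℤ → (Fin N → ℂ) → ℂ)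
    (m : Fin (l + 1) × Fin (s + 1) → ℕ) (n : ℤ) (l' : ℕ) (x : Fin N → ℂ) : ℂ :=
  if l' ≤ m (i₀, j₀) then
    (1 / (Nat.factorial l' : ℂ)) *
      ((Nat.factorial (m ((0 : Fin (l + 1)), j₀) + l') : ℂ) /
        (Nat.factorial (m ((0 : Fin (l + 1)), j₀)) : ℂ)) *
      ((∏ i' : Fin k,
          (m (⟨i'.1 + 1, Nat.succ_lt_succ (Nat.lt_of_lt_of_le i'.2 hkl)⟩,
              (0 : Fin (s + 1))) : ℂ) ^ J i') ^ l') *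
      a (fun p => m p + (if p = ((0 : Fin (l + 1)), j₀) then l' else 0) -
          (if p = (i₀, j₀) then l' else 0))
        (n - ((∑ i, J i) * l' : ℕ)) x
  else 0

lemma DeltaTerm_eq {N l s : ℕ} (k : ℕ) (hkl : k ≤ l) (J : Fin k → ℕ)
    (i₀ : Fin (l + 1)) (j₀ : Fin (s + 1))
    (a : (Fin (l + 1) × Fin (s + 1) → ℕ) → ℤ → (Fin N → ℂ) → ℂ)
    (m : Fin (l + 1) × Fin (s + 1) → ℕ) (n : ℤ) (l' : ℕ) (x : Fin N → ℂ)
    (hl' : l' ≤ m (i₀, j₀)) :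
    DeltaTerm k hkl J i₀ j₀ a m n l' x =
      (((m ((0 : Fin (l + 1)), j₀) + l').choose l' *
          (∏ i' : Fin k,
            (m (⟨i'.1 + 1, Nat.succ_lt_succ (Nat.lt_of_lt_of_le i'.2 hkl)⟩,
                (0 : Fin (s + 1)))) ^ J i') ^ l' : ℕ) : ℂ) *
        a (fun p => m p + (if p = ((0 : Fin (l + 1)), j₀) then l' else 0) -
            (if p = (i₀, j₀) then l' else 0))
          (n - ((∑ i, J i) * l' : ℕ)) x := by
  unfold DeltaTerm
  rw [if_pos hl']
  congr 1
  rw [coef_eq]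
  push_cast
  ring

/-- With `S = {(i,j) : 0 ≤ i ≤ l, 0 ≤ j ≤ s}`, `1 ≤ k ≤ l`, `J ∈ ℕ^k` with
`d = ∑ J ≥ 1`, and `(i₀, j₀) ∈ S` with `i₀ ≥ 1`:
(1) if `a` satisfies condition `(O^{y,z,z⁻¹})` then so does the family
`(m, n) ↦ m_{(i',0)} · a_{m, n−1}` for each `1 ≤ i' ≤ k` (the action of `z ∂/∂t_{i'}`); and
(2) if `a` satisfies `(O^{y,z,z⁻¹})` then for every `(m, n)` the defining sum of `ã_{m,n}`
(the coefficientwise action of `exp(σ_{i₀,j₀} ∂/∂τ_{j₀} T(z∂/∂t))`) has only finitely many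
nonzero terms and the family `ã` again satisfies `(O^{y,z,z⁻¹})`. -/
theorem stmt_8 {N l s : ℕ} (U : Set (Fin N → ℂ))
    (k : ℕ) (hk1 : 1 ≤ k) (hkl : k ≤ l)
    (J : Fin k → ℕ) (hJ : 1 ≤ ∑ i, J i)
    (i₀ : Fin (l + 1)) (j₀ : Fin (s + 1)) (hi₀ : 1 ≤ (i₀ : ℕ))
    (a : (Fin (l + 1) × Fin (s + 1) → ℕ) → ℤ → (Fin N → ℂ) → ℂ) :
    (∀ i' : Fin k, CondOyzzinv U a →
      CondOyzzinv U (fun m n x =>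
        (m (⟨i'.1 + 1, Nat.succ_lt_succ (Nat.lt_of_lt_of_le i'.2 hkl)⟩,
            (0 : Fin (s + 1))) : ℂ) * a m (n - 1) x)) ∧
    (CondOyzzinv U a →
      (∀ (m : Fin (l + 1) × Fin (s + 1) → ℕ) (n : ℤ),
        Set.Finite {l' : ℕ | ∃ x ∈ U, DeltaTerm k hkl J i₀ j₀ a m n l' x ≠ 0}) ∧
      CondOyzzinv U (fun m n x => ∑ᶠ l' : ℕ, DeltaTerm k hkl J i₀ j₀ a m n l' x)) := by
  constructor
  · intro i' h
    obtain ⟨C, C', hCcont, hC1, hC'1, hV, hB⟩ := h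
    refine ⟨fun x => 2 * C x ^ 2, C', continuousOn_const.mul (hCcont.pow 2),
      fun x hx => by show (1:ℝ) ≤ 2 * C x ^ 2; nlinarith [hC1 x hx], hC'1, ?_, ?_⟩
    · intro m n hn x hx
      have h1 : ((n - 1 : ℤ) : ℝ) < -C' * ((∑ s, m s : ℕ) + 1 : ℝ) := by
        push_cast; push_cast at hn; linarith
      simp only []
      rw [hV m (n - 1) h1 x hx, mul_zero]
    · intro m n x hx
      set idx : Fin (l + 1) × Fin (s + 1) :=
        (⟨i'.1 + 1, Nat.succ_lt_succ (Nat.lt_of_lt_of_le i'.2 hkl)⟩, (0 : Fin (s + 1))) with hidx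
      have hFeq : (if 0 ≤ n then ((n.toNat).factorial : ℝ)
          else (((-n).toNat).factorial : ℝ)⁻¹) = Fct n := rfl
      have hFeq' : (if 0 ≤ n - 1 then (((n-1).toNat).factorial : ℝ)
          else (((-(n-1)).toNat).factorial : ℝ)⁻¹) = Fct (n - 1) := rfl
      rw [hFeq]
      set μ := ∑ p, m p with hμ
      set K := n.natAbs with hK
      have hCx : 1 ≤ C x := hC1 x hx
      have hb := hB m (n - 1) x hx
      rw [hFeq'] at hb
      have hcoord : (m idx : ℝ) ≤ 2 ^ μ := by
        have h1 : m idx ≤ μ := Finset.single_le_sum (f := m)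
          (fun i _ => Nat.zero_le _) (Finset.mem_univ idx)
        have h2 : μ < 2 ^ μ := Nat.lt_two_pow_self (n := μ)
        exact_mod_cast le_of_lt (lt_of_le_of_lt h1 h2)
      have habs : ‖(m idx : ℂ) * a m (n - 1) x‖
          = (m idx : ℝ) * ‖a m (n - 1) x‖ := by
        rw [norm_mul, Complex.norm_natCast]
      have hpow : C x ^ (μ + (n - 1).natAbs + 1) ≤ C x ^ (μ + K + 2) := by
        apply pow_le_pow_right₀ hCx
        have := Int.natAbs_sub_le n 1
        simp only [Int.natAbs_one] at this
        omega
      calc ‖(m idx : ℂ) * a m (n - 1) x‖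
          = (m idx : ℝ) * ‖a m (n - 1) x‖ := habs
        _ ≤ (2:ℝ) ^ μ * (C x ^ (μ + K + 2) * Fct n) := by
            apply mul_le_mul hcoord _ (norm_nonneg _) (by positivity)
            calc ‖a m (n - 1) x‖
                ≤ C x ^ (μ + (n - 1).natAbs + 1) * Fct (n - 1) := hb
              _ ≤ C x ^ (μ + K + 2) * Fct n :=
                  mul_le_mul hpow (Fct_sub_one_le n) (Fct_nonneg _) (by positivity)
        _ ≤ (2 * C x ^ 2) ^ (μ + K + 1) * Fct n := by
            rw [← mul_assoc]
            apply mul_le_mul_of_nonneg_right _ (Fct_nonneg n)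
            rw [mul_pow, ← pow_mul]
            apply mul_le_mul _ _ (by positivity) (by positivity)
            · apply pow_le_pow_right₀ one_le_two; omega
            · apply pow_le_pow_right₀ hCx; omega
  · intro h
    obtain ⟨C, C', hCcont, hC1, hC'1, hV, hB⟩ := h
    have hzero : ∀ m n l' x, m (i₀, j₀) < l' → DeltaTerm k hkl J i₀ j₀ a m n l' x = 0 := by
      intro m n l' x hML
      unfold DeltaTerm
      rw [if_neg (by omega)]
    have hsum' : ∀ (m : Fin (l + 1) × Fin (s + 1) → ℕ) (l' : ℕ), l' ≤ m (i₀, j₀) →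
        (∑ p : Fin (l + 1) × Fin (s + 1),
          (m p + (if p = ((0 : Fin (l + 1)), j₀) then l' else 0) -
            (if p = (i₀, j₀) then l' else 0))) = ∑ p, m p := by
      intro m l' hl'
      have hle : ∀ p : Fin (l + 1) × Fin (s + 1), p ∈ Finset.univ →
          (if p = (i₀, j₀) then l' else 0) ≤
            m p + (if p = ((0 : Fin (l + 1)), j₀) then l' else 0) := by
        intro p _
        by_cases hp : p = (i₀, j₀)
        · subst hp
          rw [if_pos rfl]
          exact le_trans hl' (Nat.le_add_right _ _)
        · rw [if_neg hp]
          exact Nat.zero_le _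
      rw [Finset.sum_tsub_distrib _ hle, Finset.sum_add_distrib,
        Finset.sum_ite_eq' Finset.univ ((0 : Fin (l + 1)), j₀) (fun _ => l'),
        Finset.sum_ite_eq' Finset.univ (i₀, j₀) (fun _ => l')]
      simp
    constructor
    · intro m n
      apply Set.Finite.subset (Set.finite_Iic (m (i₀, j₀)))
      rintro l' ⟨x, hx, hne⟩
      by_contra hc
      simp only [Set.mem_Iic, not_le] at hc
      exact hne (hzero m n l' x hc)
    · refine ⟨fun x => 8 * Real.exp 2 * C x ^ (∑ i, J i + 1), C',
        continuousOn_const.mul (hCcont.pow _), ?_, hC'1, ?_, ?_⟩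
      · intro x hx
        show (1:ℝ) ≤ 8 * Real.exp 2 * C x ^ (∑ i, J i + 1)
        have h1 : (1:ℝ) ≤ C x ^ (∑ i, J i + 1) := one_le_pow₀ (hC1 x hx)
        nlinarith [Real.one_le_exp (by norm_num : (0:ℝ) ≤ 2)]
      · -- vanishing
        intro m n hn x hx
        show (∑ᶠ l' : ℕ, DeltaTerm k hkl J i₀ j₀ a m n l' x) = 0
        have hterm : ∀ l' : ℕ, DeltaTerm k hkl J i₀ j₀ a m n l' x = 0 := by
          intro l'
          rcases le_or_gt l' (m (i₀, j₀)) with hl' | hl'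
          · unfold DeltaTerm
            rw [if_pos hl']
            have hva : ((n - ((∑ i, J i) * l' : ℕ) : ℤ) : ℝ) <
                -C' * ((∑ p : Fin (l + 1) × Fin (s + 1),
                  (m p + (if p = ((0 : Fin (l + 1)), j₀) then l' else 0) -
                    (if p = (i₀, j₀) then l' else 0)) : ℕ) + 1 : ℝ) := by
              rw [hsum' m l' hl']
              push_cast at hn ⊢
              have h0 : (0:ℝ) ≤ (∑ x : Fin k, (J x : ℝ)) * (l' : ℝ) := by positivity
              linarith
            rw [hV _ _ hva x hx, mul_zero]
          · exact hzero m n l' x hl'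
        simp only [hterm]
        exact finsum_zero
      · -- bound
        intro m n x hx
        show ‖∑ᶠ l' : ℕ, DeltaTerm k hkl J i₀ j₀ a m n l' x‖ ≤
          (8 * Real.exp 2 * C x ^ (∑ i, J i + 1)) ^ ((∑ p, m p) + n.natAbs + 1) *
            (if 0 ≤ n then ((n.toNat).factorial : ℝ) else (((-n).toNat).factorial : ℝ)⁻¹)
        have hCx : (1:ℝ) ≤ C x := hC1 x hx
        set μ := ∑ p, m p with hμ
        set K := n.natAbs with hK
        set dd := ∑ i, J i with hdd
        have hMμ : m (i₀, j₀) ≤ μ :=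
          Finset.single_le_sum (f := m) (fun i _ => Nat.zero_le _) (Finset.mem_univ _)
        have hm₀μ : m ((0 : Fin (l + 1)), j₀) ≤ μ :=
          Finset.single_le_sum (f := m) (fun i _ => Nat.zero_le _) (Finset.mem_univ _)
        have hsupp : (Function.support fun l' : ℕ => DeltaTerm k hkl J i₀ j₀ a m n l' x)
            ⊆ ↑(Finset.range (m (i₀, j₀) + 1)) := by
          intro l' hl'
          simp only [Function.mem_support] at hl'
          simp only [Finset.coe_range, Set.mem_Iio]
          by_contra hc
          exact hl' (hzero m n l' x (by omega))
        rw [finsum_eq_sum_of_support_subset _ hsupp]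
        have hFeq : (if 0 ≤ n then ((n.toNat).factorial : ℝ)
            else (((-n).toNat).factorial : ℝ)⁻¹) = Fct n := rfl
        rw [hFeq]
        set B : ℝ := (4:ℝ) ^ μ * Real.exp 2 ^ μ *
          (C x ^ (dd + 1)) ^ (μ + K + 1) * Fct n with hBdef
        have hterm : ∀ l' ∈ Finset.range (m (i₀, j₀) + 1),
            ‖DeltaTerm k hkl J i₀ j₀ a m n l' x‖ ≤ B := by
          intro l' hlr
          have hl2 : l' ≤ m (i₀, j₀) := Nat.lt_succ_iff.1 (Finset.mem_range.1 hlr)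
          have hl2μ : l' ≤ μ := le_trans hl2 hMμ
          -- abbreviations
          set m₀ := m ((0 : Fin (l + 1)), j₀) with hm₀def
          set Pn : ℕ := ∏ i' : Fin k,
            (m (⟨i'.1 + 1, Nat.succ_lt_succ (Nat.lt_of_lt_of_le i'.2 hkl)⟩,
                (0 : Fin (s + 1)))) ^ J i' with hPndef
          set q : ℕ := dd * l' with hqdef
          set m' : Fin (l + 1) × Fin (s + 1) → ℕ := fun p =>
            m p + (if p = ((0 : Fin (l + 1)), j₀) then l' else 0) -
              (if p = (i₀, j₀) then l' else 0) with hm'def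
          have hDelta := DeltaTerm_eq k hkl J i₀ j₀ a m n l' x hl2
          rw [hDelta]
          rw [norm_mul, Complex.norm_natCast]
          -- bound on the natural coefficient
          have hNat : (m₀ + l').choose l' * Pn ^ l' ≤ 4 ^ μ * μ ^ q := by
            have h1 : (m₀ + l').choose l' ≤ 2 ^ (m₀ + l') :=
              choose_le_two_pow' _ _ (Nat.le_add_left _ _)
            have h2 : 2 ^ (m₀ + l') ≤ 4 ^ μ := by
              calc 2 ^ (m₀ + l') ≤ 2 ^ (2 * μ) :=
                    Nat.pow_le_pow_right (by norm_num) (by omega)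
                _ = 4 ^ μ := by rw [pow_mul]; norm_num
            have h3 : Pn ≤ μ ^ dd := by
              rw [hPndef, hdd]
              calc (∏ i' : Fin k,
                    (m (⟨i'.1 + 1, Nat.succ_lt_succ (Nat.lt_of_lt_of_le i'.2 hkl)⟩,
                        (0 : Fin (s + 1)))) ^ J i')
                  ≤ ∏ i' : Fin k, μ ^ J i' := by
                    apply Finset.prod_le_prod'
                    intro i _
                    exact Nat.pow_le_pow_left
                      (Finset.single_le_sum (f := m) (fun i _ => Nat.zero_le _)
                        (Finset.mem_univ _)) _
                _ = μ ^ (∑ i, J i) := by rw [← Finset.prod_pow_eq_pow_sum]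
            have h4 : Pn ^ l' ≤ μ ^ q := by
              calc Pn ^ l' ≤ (μ ^ dd) ^ l' := Nat.pow_le_pow_left h3 l'
                _ = μ ^ q := by rw [← pow_mul]
            exact Nat.mul_le_mul (le_trans h1 h2) h4
          have hNatR : (((m₀ + l').choose l' * Pn ^ l' : ℕ) : ℝ) ≤ (4:ℝ) ^ μ * (μ:ℝ) ^ q := by
            have := hNat
            exact_mod_cast this
          -- bound on |a m' (n - q) x|
          have hsm' : (∑ p, m' p) = μ := by
            rw [hμ]
            exact hsum' m l' hl2
          have hABound : ‖a m' ((n : ℤ) - (q : ℕ)) x‖ ≤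
              C x ^ (μ + ((n : ℤ) - (q : ℕ)).natAbs + 1) * Fct ((n : ℤ) - (q : ℕ)) := by
            have hb := hB m' ((n : ℤ) - (q : ℕ)) x hx
            rw [show (∑ s, m' s) = μ from hsm'] at hb
            exact hb
          -- exponent estimate
          have hExp : C x ^ (μ + ((n : ℤ) - (q : ℕ)).natAbs + 1) ≤
              (C x ^ (dd + 1)) ^ (μ + K + 1) := by
            rw [← pow_mul]
            apply pow_le_pow_right₀ hCx
            have hq1 : ((n : ℤ) - (q : ℕ)).natAbs ≤ K + q := by
              have := Int.natAbs_sub_le n (q : ℕ)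
              simpa [hK] using this
            have hq2 : q ≤ dd * μ := Nat.mul_le_mul_left dd hl2μ
            have hq3 : dd * μ ≤ dd * (μ + K + 1) := Nat.mul_le_mul_left dd (by omega)
            have hq4 : (dd + 1) * (μ + K + 1) = dd * (μ + K + 1) + (μ + K + 1) := by ring
            omega
          have hkey : (μ:ℝ) ^ q * Fct ((n : ℤ) - (q : ℕ)) ≤ Real.exp 2 ^ μ * Fct n :=
            key_est μ q n
          calc (((m₀ + l').choose l' * Pn ^ l' : ℕ) : ℝ) *
                ‖a m' ((n : ℤ) - (q : ℕ)) x‖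
              ≤ ((4:ℝ) ^ μ * (μ:ℝ) ^ q) *
                (C x ^ (μ + ((n : ℤ) - (q : ℕ)).natAbs + 1) * Fct ((n : ℤ) - (q : ℕ))) :=
                mul_le_mul hNatR hABound (norm_nonneg _) (by positivity)
            _ ≤ ((4:ℝ) ^ μ * (μ:ℝ) ^ q) *
                ((C x ^ (dd + 1)) ^ (μ + K + 1) * Fct ((n : ℤ) - (q : ℕ))) := by
                apply mul_le_mul_of_nonneg_left _ (by positivity)
                exact mul_le_mul_of_nonneg_right hExp (Fct_nonneg _)
            _ = (4:ℝ) ^ μ * (C x ^ (dd + 1)) ^ (μ + K + 1) *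
                ((μ:ℝ) ^ q * Fct ((n : ℤ) - (q : ℕ))) := by ring
            _ ≤ (4:ℝ) ^ μ * (C x ^ (dd + 1)) ^ (μ + K + 1) *
                (Real.exp 2 ^ μ * Fct n) := by
                apply mul_le_mul_of_nonneg_left hkey (by positivity)
            _ = B := by rw [hBdef]; ring
        calc ‖∑ l' ∈ Finset.range (m (i₀, j₀) + 1),
                DeltaTerm k hkl J i₀ j₀ a m n l' x‖
            ≤ ∑ l' ∈ Finset.range (m (i₀, j₀) + 1),
                ‖DeltaTerm k hkl J i₀ j₀ a m n l' x‖ :=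
              norm_sum_le _ _
          _ ≤ ∑ _l' ∈ Finset.range (m (i₀, j₀) + 1), B := Finset.sum_le_sum hterm
          _ = ((m (i₀, j₀) + 1 : ℕ) : ℝ) * B := by
              rw [Finset.sum_const, Finset.card_range, nsmul_eq_mul]
          _ ≤ (2:ℝ) ^ μ * B := by
              apply mul_le_mul_of_nonneg_right _ ?_
              · have h1 : m (i₀, j₀) + 1 ≤ 2 ^ μ := by
                  have := Nat.lt_two_pow_self (n := μ)
                  omega
                exact_mod_cast h1
              · rw [hBdef]
                have hC0 : (0:ℝ) ≤ C x := le_trans zero_le_one hCx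
                exact mul_nonneg (mul_nonneg (by positivity)
                  (pow_nonneg (pow_nonneg hC0 _) _)) (Fct_nonneg n)
          _ ≤ (8 * Real.exp 2 * C x ^ (dd + 1)) ^ (μ + K + 1) * Fct n := by
              rw [hBdef]
              have hstep : (2:ℝ) ^ μ * ((4:ℝ) ^ μ * Real.exp 2 ^ μ) ≤
                  (8 * Real.exp 2) ^ (μ + K + 1) := by
                have he : (2:ℝ) ^ μ * ((4:ℝ) ^ μ * Real.exp 2 ^ μ) = (8 * Real.exp 2) ^ μ := by
                  rw [← mul_pow, ← mul_pow]
                  congr 1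
                  ring
                rw [he]
                apply pow_le_pow_right₀ _ (by omega)
                nlinarith [Real.one_le_exp (by norm_num : (0:ℝ) ≤ 2)]
              calc (2:ℝ) ^ μ * ((4:ℝ) ^ μ * Real.exp 2 ^ μ *
                    (C x ^ (dd + 1)) ^ (μ + K + 1) * Fct n)
                  = ((2:ℝ) ^ μ * ((4:ℝ) ^ μ * Real.exp 2 ^ μ)) *
                    ((C x ^ (dd + 1)) ^ (μ + K + 1) * Fct n) := by ring
                _ ≤ (8 * Real.exp 2) ^ (μ + K + 1) *
                    ((C x ^ (dd + 1)) ^ (μ + K + 1) * Fct n) := by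
                    have hC0 : (0:ℝ) ≤ C x := le_trans zero_le_one hCx
                    exact mul_le_mul_of_nonneg_right hstep
                      (mul_nonneg (pow_nonneg (pow_nonneg hC0 _) _) (Fct_nonneg n))
                _ = (8 * Real.exp 2 * C x ^ (dd + 1)) ^ (μ + K + 1) * Fct n := by
                    rw [mul_pow]; ring
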